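/- arXiv:1912.08478 — 3 statements merged into one kernel-verified Lean document; each statement's English description precedes it below -/
import Mathlib

section
/- Let $-1 \le x_0 < x_1 < 0$, let $\delta_1, \delta_2 > 0$ with $\delta_1 + \delta_2 < 1/2$, and let $f : [x_0, x_1] \to \mathbb{R}$ be measurable with $Z^2 := \sup_{\tilde x \in [x_0,x_1]} (-\tilde x)^{2\delta_1} \int_{x_0}^{\tilde x} |f(x)|^2 (-x)^{2\delta_2}\, dx < \infty$. Then there is a constant $C$, depending only on $\delta_1$ and $\delta_2$ (independent of $f, x_0, x_1, Z$), such that $\int_{x_0}^{x_1} |f(x)|\, dx \le C\, (-x_0)^{1/2 - \delta_1 - \delta_2} Z$. -/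
open MeasureTheory Set

/-- Dyadic weighted `L¹` bound from a weighted `L²` bound (Lemma on `[-1,0)`). -/
theorem dyadic_weighted_L1_bound (δ₁ δ₂ : ℝ) (hδ₁ : 0 < δ₁) (hδ₂ : 0 < δ₂)
    (hsum : δ₁ + δ₂ < 1 / 2) :
    ∃ C : ℝ, 0 < C ∧
      ∀ (x₀ x₁ : ℝ) (f : ℝ → ℝ) (Z : ℝ),
        -1 ≤ x₀ → x₀ < x₁ → x₁ < 0 → Measurable f → 0 ≤ Z →
        (∀ x ∈ Icc x₀ x₁,
          ENNReal.ofReal ((-x) ^ (2 * δ₁)) *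
              ∫⁻ t in Ioc x₀ x, ENNReal.ofReal (|f t| ^ 2 * (-t) ^ (2 * δ₂)) ≤
            ENNReal.ofReal (Z ^ 2)) →
        ∫⁻ t in Ioc x₀ x₁, ENNReal.ofReal |f t| ≤
          ENNReal.ofReal (C * (-x₀) ^ (1 / 2 - δ₁ - δ₂) * Z) := by
  set α : ℝ := 1 / 2 - δ₁ - δ₂ with hα_def
  have hα : 0 < α := by simp only [hα_def]; linarith
  set r : ℝ := (1 / 2 : ℝ) ^ α with hr_def
  have hr0 : 0 < r := Real.rpow_pos_of_pos (by norm_num) _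
  have hr1 : r < 1 := Real.rpow_lt_one (by norm_num) (by norm_num) hα
  refine ⟨(1 - r)⁻¹, inv_pos.mpr (by linarith), ?_⟩
  set C : ℝ := (1 - r)⁻¹ with hC_def
  have hC : 0 < C := inv_pos.mpr (by linarith)
  intro x₀ x₁ f Z hm1 h01 h1 hf hZ hyp
  have hx₀ : x₀ < 0 := h01.trans h1
  have hnx₀ : 0 < -x₀ := by linarith
  -- dyadic points and lengths
  set a : ℕ → ℝ := fun k => x₀ * (1 / 2 : ℝ) ^ k with ha_def
  set b : ℕ → ℝ := fun k => (-x₀) * (1 / 2 : ℝ) ^ (k + 1) with hb_def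
  have hb : ∀ k, 0 < b k := by intro k; simp only [hb_def]; positivity
  have hab : ∀ k, a (k + 1) - a k = b k := by
    intro k; simp only [ha_def, hb_def, pow_succ]; ring
  have ha0 : a 0 = x₀ := by simp [ha_def]
  have ha_ge : ∀ k, x₀ ≤ a k := by
    intro k
    have h1k : (1 / 2 : ℝ) ^ k ≤ 1 := pow_le_one₀ (by norm_num) (by norm_num)
    have h0k : (0 : ℝ) ≤ (1 / 2 : ℝ) ^ k := by positivity
    simp only [ha_def]
    nlinarith
  have hna : ∀ k, -(a (k + 1)) = b k := by
    intro k; simp only [ha_def, hb_def]; ring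
  set S : ℕ → Set ℝ := fun k => Ioc x₀ x₁ ∩ Ioc (a k) (a (k + 1)) with hS_def
  have hSm : ∀ k, MeasurableSet (S k) := fun k =>
    measurableSet_Ioc.inter measurableSet_Ioc
  -- covering
  have hcov : Ioc x₀ x₁ ⊆ ⋃ k, S k := by
    intro x hx
    have hxneg : x < 0 := lt_of_le_of_lt hx.2 h1
    have hq : 0 < x / x₀ := div_pos_of_neg_of_neg hxneg hx₀
    have hex : ∃ k, x ≤ a (k + 1) := by
      obtain ⟨n, hn⟩ := exists_pow_lt_of_lt_one hq (by norm_num : (1 / 2 : ℝ) < 1)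
      refine ⟨n, ?_⟩
      have h2 : (1 / 2 : ℝ) ^ (n + 1) < x / x₀ :=
        lt_of_le_of_lt (pow_le_pow_of_le_one (by norm_num) (by norm_num) (Nat.le_succ n)) hn
      have := (lt_div_iff_of_neg hx₀).mp h2
      simp only [ha_def]
      linarith [this]
    have hk1 : x ≤ a (Nat.find hex + 1) := Nat.find_spec hex
    have hk2 : a (Nat.find hex) < x := by
      rcases Nat.eq_zero_or_eq_succ_pred (Nat.find hex) with h0 | hsucc
      · rw [h0, ha0]; exact hx.1
      · rw [hsucc]
        have := Nat.find_min hex (m := Nat.find hex - 1) (by omega)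
        push_neg at this
        simpa [Nat.succ_eq_add_one] using this
    exact mem_iUnion.mpr ⟨Nat.find hex, hx, hk2, hk1⟩
  -- per-piece estimate
  have hpiece : ∀ k, ∫⁻ t in S k, ENNReal.ofReal |f t| ≤
      ENNReal.ofReal (Z * ((-x₀) ^ α * r ^ (k + 1))) := by
    intro k
    set B : ℝ := b k with hB_def
    have hB : 0 < B := hb k
    set x' : ℝ := min x₁ (a (k + 1)) with hx'_def
    have hx'mem : x' ∈ Icc x₀ x₁ := ⟨le_min h01.le (ha_ge (k + 1)), min_le_left _ _⟩
    have hx'neg : x' < 0 := lt_of_le_of_lt (min_le_left _ _) h1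
    have hBx' : B ≤ -x' := by
      have := min_le_right x₁ (a (k + 1))
      have h := neg_le_neg this
      rw [hna k] at h
      exact h
    have hSsub : S k ⊆ Ioc x₀ x' := fun t ht => ⟨ht.1.1, le_min ht.1.2 ht.2.2⟩
    have htS : ∀ t ∈ S k, B ≤ -t := by
      intro t ht
      have h := neg_le_neg ht.2.2
      rw [hna k] at h
      exact h
    have htpos : ∀ t ∈ S k, 0 < -t := fun t ht => lt_of_lt_of_le hB (htS t ht)
    set G : ℝ → ENNReal := fun t => ENNReal.ofReal (|f t| * (-t) ^ δ₂) with hG_def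
    set H : ℝ → ENNReal := fun t => ENNReal.ofReal (((-t) ^ δ₂)⁻¹) with hH_def
    have hmw : Measurable fun t : ℝ => (-t) ^ δ₂ :=
      (Real.continuous_rpow_const hδ₂.le).measurable.comp measurable_neg
    have hGm : AEMeasurable G (volume.restrict (S k)) :=
      ((hf.abs.mul hmw).ennreal_ofReal).aemeasurable
    have hHm : AEMeasurable H (volume.restrict (S k)) :=
      ((hmw.inv).ennreal_ofReal).aemeasurable
    have step1 : ∫⁻ t in S k, ENNReal.ofReal |f t| = ∫⁻ t in S k, (G * H) t := by
      refine setLIntegral_congr_fun (hSm k) (fun t ht => ?_)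
      have hp := htpos t ht
      have hw0 : (0 : ℝ) < (-t) ^ δ₂ := Real.rpow_pos_of_pos hp _
      simp only [Pi.mul_apply, hG_def, hH_def]
      rw [← ENNReal.ofReal_mul (by positivity)]
      congr 1
      field_simp
    have h22 : Real.HolderConjugate 2 2 := Real.holderConjugate_iff.mpr ⟨one_lt_two, by norm_num⟩
    have step2 := ENNReal.lintegral_mul_le_Lp_mul_Lq (volume.restrict (S k)) h22 hGm hHm
    -- first factor
    have stepG : ∫⁻ t in S k, G t ^ (2 : ℝ) ≤
        ENNReal.ofReal (Z ^ 2 * B ^ (-(2 * δ₁))) := by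
      have e1 : ∫⁻ t in S k, G t ^ (2 : ℝ) =
          ∫⁻ t in S k, ENNReal.ofReal (|f t| ^ 2 * (-t) ^ (2 * δ₂)) := by
        refine setLIntegral_congr_fun (hSm k) (fun t ht => ?_)
        have hp := htpos t ht
        simp only [hG_def]
        rw [ENNReal.ofReal_rpow_of_nonneg (by positivity) (by norm_num)]
        congr 1
        rw [Real.mul_rpow (abs_nonneg _) (Real.rpow_nonneg hp.le _),
          ← Real.rpow_natCast (|f t|) 2, ← Real.rpow_mul hp.le]
        norm_num [mul_comm]
      rw [e1]
      have e2 : ∫⁻ t in S k, ENNReal.ofReal (|f t| ^ 2 * (-t) ^ (2 * δ₂)) ≤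
          ∫⁻ t in Ioc x₀ x', ENNReal.ofReal (|f t| ^ 2 * (-t) ^ (2 * δ₂)) :=
        lintegral_mono_set hSsub
      have hw : (0 : ℝ) < (-x') ^ (2 * δ₁) := Real.rpow_pos_of_pos (by linarith) _
      have e3 : ∫⁻ t in Ioc x₀ x', ENNReal.ofReal (|f t| ^ 2 * (-t) ^ (2 * δ₂)) ≤
          ENNReal.ofReal (Z ^ 2) / ENNReal.ofReal ((-x') ^ (2 * δ₁)) := by
        refine (ENNReal.le_div_iff_mul_le (Or.inl ?_) (Or.inl ENNReal.ofReal_ne_top)).mpr ?_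
        · simp [ENNReal.ofReal_eq_zero, not_le, hw]
        · rw [mul_comm]; exact hyp x' hx'mem
      have e4 : ENNReal.ofReal (Z ^ 2) / ENNReal.ofReal ((-x') ^ (2 * δ₁)) =
          ENNReal.ofReal (Z ^ 2 / (-x') ^ (2 * δ₁)) := (ENNReal.ofReal_div_of_pos hw).symm
      have e5 : Z ^ 2 / (-x') ^ (2 * δ₁) ≤ Z ^ 2 * B ^ (-(2 * δ₁)) := by
        have hwB : B ^ (2 * δ₁) ≤ (-x') ^ (2 * δ₁) :=
          Real.rpow_le_rpow hB.le hBx' (by positivity)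
        have hBp : (0 : ℝ) < B ^ (2 * δ₁) := Real.rpow_pos_of_pos hB _
        rw [Real.rpow_neg hB.le, ← div_eq_mul_inv]
        exact div_le_div_of_nonneg_left (by positivity) hBp hwB
      calc _ ≤ ENNReal.ofReal (Z ^ 2) / ENNReal.ofReal ((-x') ^ (2 * δ₁)) := e2.trans e3
        _ = ENNReal.ofReal (Z ^ 2 / (-x') ^ (2 * δ₁)) := e4
        _ ≤ _ := ENNReal.ofReal_le_ofReal e5
    -- second factor
    have stepH : ∫⁻ t in S k, H t ^ (2 : ℝ) ≤ ENNReal.ofReal (B ^ (1 - 2 * δ₂)) := by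
      have e1 : ∫⁻ t in S k, H t ^ (2 : ℝ) ≤
          ∫⁻ _ in S k, ENNReal.ofReal (B ^ (-(2 * δ₂))) := by
        refine setLIntegral_mono measurable_const fun t ht => ?_
        have hp := htpos t ht
        simp only [hH_def]
        rw [ENNReal.ofReal_rpow_of_nonneg (by positivity) (by norm_num)]
        refine ENNReal.ofReal_le_ofReal ?_
        have e : (((-t) ^ δ₂)⁻¹) ^ (2 : ℝ) = (-t) ^ (-(2 * δ₂)) := by
          rw [← Real.rpow_neg hp.le, ← Real.rpow_mul hp.le]
          ring_nf
        rw [e]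
        exact Real.rpow_le_rpow_of_nonpos hB (htS t ht) (by linarith)
      have e2 : (∫⁻ _ in S k, ENNReal.ofReal (B ^ (-(2 * δ₂)))) =
          ENNReal.ofReal (B ^ (-(2 * δ₂))) * volume (S k) := setLIntegral_const _ _
      have e3 : volume (S k) ≤ ENNReal.ofReal B := by
        calc volume (S k) ≤ volume (Ioc (a k) (a (k + 1))) :=
              measure_mono inter_subset_right
          _ = ENNReal.ofReal (a (k + 1) - a k) := Real.volume_Ioc
          _ = ENNReal.ofReal B := by rw [hab k]
      have e4 : B ^ (-(2 * δ₂)) * B = B ^ (1 - 2 * δ₂) := by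
        nth_rewrite 2 [show B = B ^ (1 : ℝ) from (Real.rpow_one B).symm]
        rw [← Real.rpow_add hB]
        ring_nf
      calc ∫⁻ t in S k, H t ^ (2 : ℝ) ≤ ENNReal.ofReal (B ^ (-(2 * δ₂))) * volume (S k) :=
            e1.trans_eq e2
        _ ≤ ENNReal.ofReal (B ^ (-(2 * δ₂))) * ENNReal.ofReal B :=
            mul_le_mul_right e3 _
        _ = ENNReal.ofReal (B ^ (-(2 * δ₂)) * B) :=
            (ENNReal.ofReal_mul (by positivity)).symm
        _ = ENNReal.ofReal (B ^ (1 - 2 * δ₂)) := by rw [e4]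
    -- combine
    have hfinal : (ENNReal.ofReal (Z ^ 2 * B ^ (-(2 * δ₁)))) ^ (1 / 2 : ℝ) *
        (ENNReal.ofReal (B ^ (1 - 2 * δ₂))) ^ (1 / 2 : ℝ) =
        ENNReal.ofReal (Z * ((-x₀) ^ α * r ^ (k + 1))) := by
      rw [ENNReal.ofReal_rpow_of_nonneg (by positivity) (by norm_num),
        ENNReal.ofReal_rpow_of_nonneg (by positivity) (by norm_num),
        ← ENNReal.ofReal_mul (by positivity)]
      congr 1
      have eZ : (Z ^ 2 * B ^ (-(2 * δ₁))) ^ (1 / 2 : ℝ) = Z * B ^ (-δ₁) := by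
        rw [Real.mul_rpow (by positivity) (by positivity),
          ← Real.rpow_natCast Z 2, ← Real.rpow_mul hZ, ← Real.rpow_mul hB.le,
          show -(2 * δ₁) * (1 / 2 : ℝ) = -δ₁ by ring]
        norm_num
      have eB : (B ^ (1 - 2 * δ₂)) ^ (1 / 2 : ℝ) = B ^ (1 / 2 - δ₂) := by
        rw [← Real.rpow_mul hB.le]
        ring_nf
      rw [eZ, eB, mul_assoc, ← Real.rpow_add hB]
      have eα : -δ₁ + (1 / 2 - δ₂) = α := by rw [hα_def]; ring
      rw [eα]
      congr 1
      have eBval : B = (-x₀) * (1 / 2 : ℝ) ^ (k + 1) := rfl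
      rw [eBval, Real.mul_rpow hnx₀.le (by positivity)]
      congr 1
      rw [← Real.rpow_natCast ((1 / 2 : ℝ)) (k + 1), ← Real.rpow_mul (by norm_num),
        mul_comm ((k + 1 : ℕ) : ℝ) α, Real.rpow_mul (by norm_num), hr_def,
        Real.rpow_natCast]
    calc ∫⁻ t in S k, ENNReal.ofReal |f t| = ∫⁻ t in S k, (G * H) t := step1
      _ ≤ (∫⁻ t in S k, G t ^ (2 : ℝ)) ^ (1 / 2 : ℝ) *
          (∫⁻ t in S k, H t ^ (2 : ℝ)) ^ (1 / 2 : ℝ) := step2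
      _ ≤ (ENNReal.ofReal (Z ^ 2 * B ^ (-(2 * δ₁)))) ^ (1 / 2 : ℝ) *
          (ENNReal.ofReal (B ^ (1 - 2 * δ₂))) ^ (1 / 2 : ℝ) :=
          mul_le_mul' (ENNReal.rpow_le_rpow stepG (by norm_num))
            (ENNReal.rpow_le_rpow stepH (by norm_num))
      _ = ENNReal.ofReal (Z * ((-x₀) ^ α * r ^ (k + 1))) := hfinal
  -- sum up
  have hsummable : Summable (fun k : ℕ => Z * ((-x₀) ^ α * r ^ (k + 1))) := by
    have he : (fun k : ℕ => Z * ((-x₀) ^ α * r ^ (k + 1))) =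
        fun k : ℕ => (Z * (-x₀) ^ α * r) * r ^ k := by
      funext k; ring
    rw [he]
    exact (summable_geometric_of_lt_one hr0.le hr1).mul_left _
  have hsum_le : (∑' k : ℕ, Z * ((-x₀) ^ α * r ^ (k + 1))) ≤ C * (-x₀) ^ α * Z := by
    have he : (fun k : ℕ => Z * ((-x₀) ^ α * r ^ (k + 1))) =
        fun k : ℕ => (Z * (-x₀) ^ α * r) * r ^ k := by
      funext k; ring
    rw [he, tsum_mul_left, tsum_geometric_of_lt_one hr0.le hr1]
    have h1 : r * (1 - r)⁻¹ ≤ C := by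
      rw [hC_def]
      exact mul_le_of_le_one_left (inv_nonneg.mpr (by linarith)) hr1.le
    have h2 : 0 ≤ Z * (-x₀) ^ α := mul_nonneg hZ (Real.rpow_nonneg hnx₀.le _)
    calc Z * (-x₀) ^ α * r * (1 - r)⁻¹ = (Z * (-x₀) ^ α) * (r * (1 - r)⁻¹) := by ring
      _ ≤ (Z * (-x₀) ^ α) * C := mul_le_mul_of_nonneg_left h1 h2
      _ = C * (-x₀) ^ α * Z := by ring
  calc ∫⁻ t in Ioc x₀ x₁, ENNReal.ofReal |f t|
      ≤ ∫⁻ t in ⋃ k, S k, ENNReal.ofReal |f t| := lintegral_mono_set hcov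
    _ ≤ ∑' k, ∫⁻ t in S k, ENNReal.ofReal |f t| := lintegral_iUnion_le _ _
    _ ≤ ∑' k, ENNReal.ofReal (Z * ((-x₀) ^ α * r ^ (k + 1))) :=
        ENNReal.tsum_le_tsum hpiece
    _ = ENNReal.ofReal (∑' k : ℕ, Z * ((-x₀) ^ α * r ^ (k + 1))) :=
        (ENNReal.ofReal_tsum_of_nonneg (fun k => by positivity) hsummable).symm
    _ ≤ ENNReal.ofReal (C * (-x₀) ^ α * Z) := ENNReal.ofReal_le_ofReal hsum_le
end

section
/- Let $0 < \gamma < \pi/8$ and let $a : [0,\pi] \to [0,1]$ be continuous with $a(\theta) = 1$ for $\theta \in [2\gamma, \pi - 2\gamma]$ and $a(\theta) = 0$ for $\theta \in [0,\gamma] \cup [\pi-\gamma, \pi]$. With $I := \int_0^{\pi} a^2 \sin$ and $h(\theta) := \frac{1}{2\sin\theta}\big[\int_0^{\theta} a^2\sin - I\frac{1-\cos\theta}{2}\big]$, one has the global bound $|\sin(\theta)\, h(\theta)| \le 2(1 - \cos(2\gamma)) \le 4\gamma^2$ for all $\theta \in (0,\pi)$. -/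
open Real Set MeasureTheory intervalIntegral

/-- Global bound `|sin θ · h(θ)| ≤ 2(1 - cos 2γ) ≤ 4γ²`. -/
theorem h_global_bound (γ : ℝ) (hγ0 : 0 < γ) (hγ : γ < π / 8)
    (a : ℝ → ℝ) (ha : ContinuousOn a (Icc 0 π))
    (harange : ∀ θ ∈ Icc (0:ℝ) π, a θ ∈ Icc (0:ℝ) 1)
    (haone : ∀ θ ∈ Icc (2 * γ) (π - 2 * γ), a θ = 1)
    (hazero : ∀ θ ∈ Icc (0:ℝ) γ ∪ Icc (π - γ) π, a θ = 0) :
    (∀ θ ∈ Ioo (0:ℝ) π,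
      |Real.sin θ *
          (1 / (2 * Real.sin θ) *
            ((∫ x in (0:ℝ)..θ, (a x) ^ 2 * Real.sin x) -
              (∫ x in (0:ℝ)..π, (a x) ^ 2 * Real.sin x) * ((1 - Real.cos θ) / 2)))| ≤
        2 * (1 - Real.cos (2 * γ))) ∧
    2 * (1 - Real.cos (2 * γ)) ≤ 4 * γ ^ 2 := by
  have hπ : (0:ℝ) < π := Real.pi_pos
  have h2γ0 : (0:ℝ) ≤ 2 * γ := by linarith
  have h2γle : 2 * γ ≤ π - 2 * γ := by linarith
  have hπ2γ : π - 2 * γ ≤ π := by linarith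
  have hmem1 : (2 * γ) ∈ Icc (0:ℝ) π := ⟨h2γ0, by linarith⟩
  have hmem2 : (π - 2 * γ) ∈ Icc (0:ℝ) π := ⟨by linarith, hπ2γ⟩
  have hmem0 : (0:ℝ) ∈ Icc (0:ℝ) π := ⟨le_rfl, hπ.le⟩
  have hmemπ : π ∈ Icc (0:ℝ) π := ⟨hπ.le, le_rfl⟩
  set f : ℝ → ℝ := fun x => (a x ^ 2 - 1) * Real.sin x with hf
  have hcf : ContinuousOn f (Icc 0 π) :=
    ((ha.pow 2).sub continuousOn_const).mul Real.continuous_sin.continuousOn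
  have hint : ∀ c ∈ Icc (0:ℝ) π, ∀ d ∈ Icc (0:ℝ) π, IntervalIntegrable f volume c d :=
    fun c hc d hd => (hcf.mono (uIcc_subset_Icc hc hd)).intervalIntegrable
  have hfabs : ∀ x ∈ Icc (0:ℝ) π, |f x| ≤ Real.sin x := by
    intro x hx
    have hs : 0 ≤ Real.sin x := Real.sin_nonneg_of_nonneg_of_le_pi hx.1 hx.2
    have h1 := (harange x hx).1
    have h2 := (harange x hx).2
    have habs1 : |a x ^ 2 - 1| ≤ 1 := by
      rw [abs_le]; constructor <;> nlinarith
    calc |f x| = |a x ^ 2 - 1| * Real.sin x := by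
          rw [hf]; rw [abs_mul, abs_of_nonneg hs]
      _ ≤ 1 * Real.sin x := mul_le_mul_of_nonneg_right habs1 hs
      _ = Real.sin x := one_mul _
  have hintabs : ∀ c ∈ Icc (0:ℝ) π, ∀ d ∈ Icc (0:ℝ) π,
      IntervalIntegrable (fun x => |f x|) volume c d :=
    fun c hc d hd => (hint c hc d hd).abs
  have hB : (∫ x in (0:ℝ)..π, |f x|) ≤ 2 * (1 - Real.cos (2 * γ)) := by
    have split1 : (∫ x in (0:ℝ)..(2*γ), |f x|) + (∫ x in (2*γ)..(π - 2*γ), |f x|)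
        = ∫ x in (0:ℝ)..(π - 2*γ), |f x| :=
      integral_add_adjacent_intervals (hintabs 0 hmem0 _ hmem1) (hintabs _ hmem1 _ hmem2)
    have split2 : (∫ x in (0:ℝ)..(π - 2*γ), |f x|) + (∫ x in (π - 2*γ)..π, |f x|)
        = ∫ x in (0:ℝ)..π, |f x| :=
      integral_add_adjacent_intervals (hintabs 0 hmem0 _ hmem2) (hintabs _ hmem2 _ hmemπ)
    have hmid : (∫ x in (2*γ)..(π - 2*γ), |f x|) = 0 := by
      have hcg : EqOn (fun x => |f x|) (fun _ => (0:ℝ)) (uIcc (2*γ) (π - 2*γ)) := by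
        intro x hx
        rw [uIcc_of_le h2γle] at hx
        simp only [hf, haone x hx]
        norm_num
      rw [intervalIntegral.integral_congr hcg, intervalIntegral.integral_const]
      simp
    have hfirst : (∫ x in (0:ℝ)..(2*γ), |f x|) ≤ 1 - Real.cos (2 * γ) := by
      have hmono : (∫ x in (0:ℝ)..(2*γ), |f x|) ≤ ∫ x in (0:ℝ)..(2*γ), Real.sin x :=
        intervalIntegral.integral_mono_on h2γ0 (hintabs 0 hmem0 _ hmem1)
          (Real.continuous_sin.intervalIntegrable _ _)
          (fun x hx => hfabs x ⟨hx.1, hx.2.trans hmem1.2⟩)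
      rwa [integral_sin, Real.cos_zero] at hmono
    have hlast : (∫ x in (π - 2*γ)..π, |f x|) ≤ 1 - Real.cos (2 * γ) := by
      have hmono : (∫ x in (π - 2*γ)..π, |f x|) ≤ ∫ x in (π - 2*γ)..π, Real.sin x :=
        intervalIntegral.integral_mono_on hπ2γ (hintabs _ hmem2 _ hmemπ)
          (Real.continuous_sin.intervalIntegrable _ _)
          (fun x hx => hfabs x ⟨hmem2.1.trans hx.1, hx.2⟩)
      rw [integral_sin, Real.cos_pi_sub, Real.cos_pi] at hmono
      linarith
    linarith
  have hgbound : ∀ θ ∈ Icc (0:ℝ) π,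
      |∫ x in (0:ℝ)..θ, f x| ≤ 2 * (1 - Real.cos (2 * γ)) := by
    intro θ hθ
    have h1 : |∫ x in (0:ℝ)..θ, f x| ≤ ∫ x in (0:ℝ)..θ, |f x| :=
      intervalIntegral.abs_integral_le_integral_abs hθ.1
    have h2 : (∫ x in (0:ℝ)..θ, |f x|) ≤ ∫ x in (0:ℝ)..π, |f x| :=
      intervalIntegral.integral_mono_interval le_rfl hθ.1 hθ.2
        (Filter.Eventually.of_forall fun x => abs_nonneg _) (hintabs 0 hmem0 π hmemπ)
    linarith
  have hFkey : ∀ θ ∈ Icc (0:ℝ) π,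
      (∫ x in (0:ℝ)..θ, a x ^ 2 * Real.sin x)
        = (∫ x in (0:ℝ)..θ, f x) + (1 - Real.cos θ) := by
    intro θ hθ
    have hcong : (∫ x in (0:ℝ)..θ, a x ^ 2 * Real.sin x)
        = ∫ x in (0:ℝ)..θ, (f x + Real.sin x) := by
      apply intervalIntegral.integral_congr
      intro x _
      simp only [hf]; ring
    rw [hcong, intervalIntegral.integral_add (hint 0 hmem0 θ hθ)
      (Real.continuous_sin.intervalIntegrable _ _), integral_sin, Real.cos_zero]
  constructor
  · intro θ hθ
    have hθI : θ ∈ Icc (0:ℝ) π := ⟨hθ.1.le, hθ.2.le⟩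
    have hsθ : 0 < Real.sin θ := Real.sin_pos_of_pos_of_lt_pi hθ.1 hθ.2
    have hsne : Real.sin θ ≠ 0 := ne_of_gt hsθ
    set gθ := ∫ x in (0:ℝ)..θ, f x with hgθ
    set gπ := ∫ x in (0:ℝ)..π, f x with hgπdef
    have hFθ := hFkey θ hθI
    have hFπ := hFkey π hmemπ
    rw [Real.cos_pi] at hFπ
    have heq : Real.sin θ *
          (1 / (2 * Real.sin θ) *
            ((∫ x in (0:ℝ)..θ, (a x) ^ 2 * Real.sin x) -
              (∫ x in (0:ℝ)..π, (a x) ^ 2 * Real.sin x) * ((1 - Real.cos θ) / 2)))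
        = (gθ - gπ * ((1 - Real.cos θ) / 2)) / 2 := by
      rw [hFθ, hFπ]
      field_simp
      ring
    rw [heq]
    have hcb1 : Real.cos θ ≤ 1 := Real.cos_le_one θ
    have hcb2 : -1 ≤ Real.cos θ := Real.neg_one_le_cos θ
    have hb1 : |gθ| ≤ 2 * (1 - Real.cos (2 * γ)) := hgbound θ hθI
    have hb2 : |gπ| ≤ 2 * (1 - Real.cos (2 * γ)) := hgbound π hmemπ
    have hc0 : 0 ≤ (1 - Real.cos θ) / 2 := by linarith
    have hc1 : (1 - Real.cos θ) / 2 ≤ 1 := by linarith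
    have htri : |gθ - gπ * ((1 - Real.cos θ) / 2)|
        ≤ |gθ| + |gπ| * ((1 - Real.cos θ) / 2) := by
      calc |gθ - gπ * ((1 - Real.cos θ) / 2)|
          ≤ |gθ| + |gπ * ((1 - Real.cos θ) / 2)| := abs_sub _ _
        _ = |gθ| + |gπ| * ((1 - Real.cos θ) / 2) := by
            rw [abs_mul, abs_of_nonneg hc0]
    have habs2 : |(gθ - gπ * ((1 - Real.cos θ) / 2)) / 2|
        = |gθ - gπ * ((1 - Real.cos θ) / 2)| / 2 := by
      rw [abs_div]; norm_num
    rw [habs2]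
    have hBnn : (0:ℝ) ≤ 2 * (1 - Real.cos (2 * γ)) := by
      nlinarith [Real.cos_le_one (2 * γ)]
    nlinarith [abs_nonneg gπ, abs_nonneg gθ, mul_le_mul hb2 hc1 hc0 hBnn]
  · have hq := Real.one_sub_sq_div_two_le_cos (x := 2 * γ)
    nlinarith
end

section
/- Let $a > 1$, $A \ge 0$, and let $f : [-1, 0) \to \mathbb{R}$ be continuous with $|f(u)| \le A\, u^{-2}$ for all $u \in [-1,0)$. For $y_0 \in \mathbb{R}$ let $y_{y_0}$ denote the unique solution on $[-1,0)$ of the ODE $y'(u) + \frac{a}{u} y(u) = f(u)$ with $y(-1) = y_0$. Then: (i) there is exactly one choice of $y_0$, namely $y_0 = -\int_{-1}^{0} (-s)^a f(s)\, ds$, for which $\sup_{u \in [-1,0)} |u\, y_{y_0}(u)| < \infty$; (ii) for this choice one has $|y_{y_0}(u)| \le \frac{A}{a-1} |u|^{-1}$ for all $u \in [-1,0)$; and (iii) for every other choice of $y_0$, $\limsup_{u \to 0^-} |u|^{a} |y_{y_0}(u)| > 0$, so $y_{y_0}$ blows up at the faster rate $|u|^{-a}$. -/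
open Set MeasureTheory Filter

/-- Fine-tuning of initial data for the ODE `y' + (a/u) y = f` on `[-1, 0)`:
the solution stays bounded by the self-similar rate `|u|⁻¹` if and only if
`y(-1) = -∫_{-1}^0 (-s)^a f(s) ds`, and for any other initial value the solution
blows up at the rate `|u|^{-a}`. -/
theorem ode_fine_tuning (a A : ℝ) (ha : 1 < a) (hA : 0 ≤ A)
    (f : ℝ → ℝ) (hf : ContinuousOn f (Ico (-1 : ℝ) 0))
    (hfb : ∀ u ∈ Ico (-1 : ℝ) 0, |f u| ≤ A / u ^ 2)
    (y : ℝ → ℝ)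
    (hy : ∀ u ∈ Ico (-1 : ℝ) 0,
      HasDerivWithinAt y (f u - a / u * y u) (Ico (-1 : ℝ) 0) u) :
    ((∃ C : ℝ, ∀ u ∈ Ico (-1 : ℝ) 0, |u * y u| ≤ C) ↔
        y (-1) = -∫ s in Ioo (-1 : ℝ) 0, (-s) ^ a * f s) ∧
    (y (-1) = -∫ s in Ioo (-1 : ℝ) 0, (-s) ^ a * f s →
        ∀ u ∈ Ico (-1 : ℝ) 0, |y u| ≤ A / (a - 1) * |u|⁻¹) ∧
    (y (-1) ≠ -∫ s in Ioo (-1 : ℝ) 0, (-s) ^ a * f s →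
        0 < Filter.limsup (fun u => |u| ^ a * |y u|) (nhdsWithin 0 (Iio (0 : ℝ)))) := by
  set h : ℝ → ℝ := fun s => (-s) ^ a * f s with hh
  set L : ℝ := ∫ s in Ioo (-1 : ℝ) 0, h s with hLdef
  set g : ℝ → ℝ := fun u => (-u) ^ a * y u with hgdef
  -- derivative of g
  have hg : ∀ u ∈ Ico (-1:ℝ) 0, HasDerivWithinAt g (h u) (Ico (-1:ℝ) 0) u := by
    intro u hu
    have hu0 : u < 0 := hu.2
    have hnu : (0:ℝ) < -u := by linarith
    have hF : HasDerivAt (fun u : ℝ => (-u) ^ a) (a * (-u) ^ (a-1) * (-1)) u :=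
      (Real.hasDerivAt_rpow_const (x := -u) (p := a) (Or.inl (ne_of_gt hnu))).comp u
        (hasDerivAt_neg u)
    have hmul := (hF.hasDerivWithinAt).mul (hy u hu)
    have e1 : (-u) ^ a = (-u) ^ (a-1) * (-u) := by
      rw [← Real.rpow_add_one (ne_of_gt hnu) (a-1)]; norm_num
    have hune : u ≠ 0 := ne_of_lt hu0
    have e3 : (-u) ^ a * (a / u * y u) = -(a * (-u) ^ (a-1) * y u) := by
      rw [e1]
      field_simp
    have e2 : a * (-u) ^ (a-1) * (-1) * y u + (-u) ^ a * (f u - a / u * y u) = h u := by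
      rw [hh]
      simp only [mul_sub]
      rw [e3]
      ring
    rw [← e2]
    exact hmul
  -- continuity of h
  have hCont : ContinuousOn h (Ico (-1:ℝ) 0) := by
    apply ContinuousOn.mul _ hf
    apply ContinuousOn.rpow_const continuous_neg.continuousOn
    intro x _
    exact Or.inr (by linarith)
  -- pointwise bound on h
  have hhb : ∀ s ∈ Ico (-1:ℝ) 0, |h s| ≤ A * (-s) ^ (a-2) := by
    intro s hs
    have hs0 : (0:ℝ) < -s := by linarith [hs.2]
    have h1 : |h s| = (-s)^a * |f s| := by
      rw [hh, abs_mul, abs_of_nonneg (Real.rpow_nonneg hs0.le a)]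
    have h2 : s ^ 2 = (-s) ^ (2:ℝ) := by
      rw [show ((2:ℝ)) = ((2:ℕ):ℝ) by norm_num, Real.rpow_natCast]; ring
    calc |h s| = (-s)^a * |f s| := h1
      _ ≤ (-s)^a * (A / s^2) :=
          mul_le_mul_of_nonneg_left (hfb s hs) (Real.rpow_nonneg hs0.le a)
      _ = A * (-s) ^ (a-2) := by
          rw [h2, Real.rpow_sub hs0]
          ring
  -- integrability of the majorant
  have hMaj : IntegrableOn (fun s : ℝ => (-s) ^ (a-2)) (Ioo (-1:ℝ) 0) := by
    have h1 : IntervalIntegrable (fun x : ℝ => x ^ (a-2)) volume 0 1 :=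
      intervalIntegral.intervalIntegrable_rpow' (by linarith)
    have h2 := (IntervalIntegrable.iff_comp_neg).mp h1
    rw [neg_zero] at h2
    have h4 := (intervalIntegrable_iff_integrableOn_Ioc_of_le
      (by norm_num : (-1:ℝ) ≤ 0)).mp h2.symm
    exact h4.mono_set Ioo_subset_Ioc_self
  -- integrability of h
  have hInt : IntegrableOn h (Ioo (-1:ℝ) 0) := by
    have hMajA : IntegrableOn (fun s : ℝ => A * (-s) ^ (a-2)) (Ioo (-1:ℝ) 0) :=
      hMaj.const_mul A
    apply Integrable.mono' hMajA
    · exact (hCont.mono Ioo_subset_Ico_self).aestronglyMeasurable measurableSet_Ioo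
    · rw [ae_restrict_iff' measurableSet_Ioo]
      filter_upwards with s hs
      simpa [Real.norm_eq_abs] using hhb s (Ioo_subset_Ico_self hs)
  -- the key integral formula
  have key : ∀ u ∈ Ico (-1:ℝ) 0, g u = (y (-1) + L) - ∫ s in Ioo u 0, h s := by
    intro u hu
    have hu1 : (-1:ℝ) ≤ u := hu.1
    have hu0 : u < 0 := hu.2
    have hIocsub : Ioc (-1:ℝ) u ⊆ Ioo (-1:ℝ) 0 := fun x hx => ⟨hx.1, lt_of_le_of_lt hx.2 hu0⟩
    have hIoosub : Ioo u (0:ℝ) ⊆ Ioo (-1:ℝ) 0 := fun x hx =>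
      ⟨lt_of_le_of_lt hu1 hx.1, hx.2⟩
    have hftc : ∫ s in (-1:ℝ)..u, h s = g u - g (-1) := by
      apply intervalIntegral.integral_eq_sub_of_hasDeriv_right_of_le hu1
      · have hcg : ContinuousOn g (Ico (-1:ℝ) 0) := fun x hx => (hg x hx).continuousWithinAt
        exact hcg.mono (fun x hx => ⟨hx.1, lt_of_le_of_lt hx.2 hu0⟩)
      · intro x hx
        have hx' : x ∈ Ico (-1:ℝ) 0 := ⟨le_of_lt hx.1, lt_trans hx.2 hu0⟩
        have hmem : Ico (-1:ℝ) 0 ∈ nhds x :=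
          mem_nhds_iff.mpr ⟨Ioo (-1:ℝ) 0, Ioo_subset_Ico_self, isOpen_Ioo,
            ⟨hx.1, lt_trans hx.2 hu0⟩⟩
        exact ((hg x hx').hasDerivAt hmem).hasDerivWithinAt
      · exact (intervalIntegrable_iff_integrableOn_Ioc_of_le hu1).mpr (hInt.mono_set hIocsub)
    have hdisj : Disjoint (Ioc (-1:ℝ) u) (Ioo u 0) := by
      apply Set.disjoint_left.mpr
      intro x hx hx2
      exact absurd hx.2 (not_le.mpr hx2.1)
    have hsplit : L = (∫ s in Ioc (-1:ℝ) u, h s) + ∫ s in Ioo u 0, h s := by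
      rw [hLdef, ← Set.Ioc_union_Ioo_eq_Ioo hu1 hu0,
        setIntegral_union hdisj measurableSet_Ioo (hInt.mono_set hIocsub)
          (hInt.mono_set hIoosub)]
    have hg1 : g (-1) = y (-1) := by
      rw [hgdef]; norm_num
    have h4 : g u = g (-1) + ∫ s in (-1:ℝ)..u, h s := by rw [hftc]; ring
    rw [intervalIntegral.integral_of_le hu1] at h4
    rw [h4, hg1]
    have := hsplit
    linarith
  -- bound on the tail integral
  have tailbound : ∀ u ∈ Ico (-1:ℝ) 0, |∫ s in Ioo u 0, h s| ≤ A / (a-1) * (-u) ^ (a-1) := by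
    intro u hu
    have hu1 : (-1:ℝ) ≤ u := hu.1
    have hu0 : u < 0 := hu.2
    have hnu : (0:ℝ) < -u := by linarith
    have hIoosub : Ioo u (0:ℝ) ⊆ Ioo (-1:ℝ) 0 := fun x hx =>
      ⟨lt_of_le_of_lt hu1 hx.1, hx.2⟩
    have hcomp : ∫ s in Ioo u (0:ℝ), (-s) ^ (a-2) = (-u) ^ (a-1) / (a-1) := by
      rw [← integral_Ioc_eq_integral_Ioo, ← intervalIntegral.integral_of_le hu0.le,
        intervalIntegral.integral_comp_neg (fun x => x ^ (a-2))]
      rw [neg_zero, integral_rpow (Or.inl (by linarith))]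
      rw [Real.zero_rpow (by intro hc; linarith [hc] : a - 2 + 1 ≠ 0)]
      rw [show a - 2 + 1 = a - 1 by ring]
      ring
    have h1 : |∫ s in Ioo u (0:ℝ), h s| ≤ ∫ s in Ioo u (0:ℝ), |h s| := by
      simpa [Real.norm_eq_abs] using
        norm_integral_le_integral_norm (μ := volume.restrict (Ioo u (0:ℝ))) h
    have h2 : ∫ s in Ioo u (0:ℝ), |h s| ≤ ∫ s in Ioo u (0:ℝ), A * (-s) ^ (a-2) := by
      have hMajA : IntegrableOn (fun s : ℝ => A * (-s) ^ (a-2)) (Ioo (-1:ℝ) 0) :=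
        hMaj.const_mul A
      apply setIntegral_mono_on ((hInt.mono_set hIoosub).abs)
        (hMajA.mono_set hIoosub) measurableSet_Ioo
      intro s hs
      exact hhb s ⟨le_of_lt (lt_of_le_of_lt hu1 hs.1), hs.2⟩
    have h3 : ∫ s in Ioo u (0:ℝ), A * (-s) ^ (a-2) = A / (a-1) * (-u) ^ (a-1) := by
      rw [MeasureTheory.integral_const_mul, hcomp]
      ring
    linarith
  -- eventually in Ico
  have hev : ∀ᶠ u in nhdsWithin 0 (Iio (0:ℝ)), u ∈ Ico (-1:ℝ) 0 :=
    Filter.mem_of_superset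
      (Ioo_mem_nhdsLT_of_mem (by norm_num : (0:ℝ) ∈ Ioc (-1:ℝ) 0)) Ioo_subset_Ico_self
  -- the rpow factor tends to 0
  have hrpow0 : Filter.Tendsto (fun u : ℝ => (-u) ^ (a-1)) (nhds (0:ℝ)) (nhds 0) := by
    have h1 : ContinuousAt (fun x : ℝ => x ^ (a-1)) (-0 : ℝ) := by
      rw [neg_zero]; exact Real.continuousAt_rpow_const 0 (a-1) (Or.inr (by linarith))
    have h2 := (h1.comp (continuous_neg.continuousAt (x := (0:ℝ)))).tendsto
    simpa [Function.comp_def, Real.zero_rpow (by intro hc; linarith [hc] : a - 1 ≠ 0)] using h2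
  have hbound0 : Filter.Tendsto (fun u : ℝ => A/(a-1) * (-u) ^ (a-1))
      (nhdsWithin 0 (Iio (0:ℝ))) (nhds 0) := by
    have h1 : Filter.Tendsto (fun u : ℝ => A/(a-1) * (-u) ^ (a-1)) (nhds (0:ℝ))
        (nhds (A/(a-1) * 0)) := hrpow0.const_mul _
    rw [mul_zero] at h1
    exact h1.mono_left nhdsWithin_le_nhds
  -- g tends to y(-1) + L
  have hgc : Filter.Tendsto g (nhdsWithin 0 (Iio (0:ℝ))) (nhds (y (-1) + L)) := by
    rw [tendsto_iff_norm_sub_tendsto_zero]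
    apply squeeze_zero' (Filter.Eventually.of_forall (fun u => norm_nonneg _)) _ hbound0
    filter_upwards [hev] with u hu
    have h1 := key u hu
    have h2 := tailbound u hu
    rw [Real.norm_eq_abs, h1]
    simpa using h2
  -- part 2
  have part2 : y (-1) = -L → ∀ u ∈ Ico (-1:ℝ) 0, |y u| ≤ A/(a-1) * |u|⁻¹ := by
    intro h0 u hu
    have hu0 : u < 0 := hu.2
    have hnu : (0:ℝ) < -u := by linarith
    have hpa : (0:ℝ) < (-u) ^ a := Real.rpow_pos_of_pos hnu a
    have hgu := key u hu
    rw [h0] at hgu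
    have h1 : |g u| ≤ A/(a-1) * (-u) ^ (a-1) := by
      rw [hgu]
      simpa using tailbound u hu
    have h2 : (-u)^a * |y u| ≤ A/(a-1) * (-u) ^ (a-1) := by
      calc (-u)^a * |y u| = |g u| := by
            rw [hgdef, abs_mul, abs_of_nonneg hpa.le]
        _ ≤ _ := h1
    have e : (-u)^(a-1) = (-u)^a * (-u)⁻¹ := by
      rw [show a - 1 = a + (-1) by ring, Real.rpow_add hnu, Real.rpow_neg_one]
    have h3 : (-u)^a * |y u| ≤ (-u)^a * (A/(a-1) * (-u)⁻¹) := by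
      rw [e] at h2
      linarith [h2]
    have h4 := le_of_mul_le_mul_left h3 hpa
    rwa [abs_of_neg hu0]
  -- main dichotomy pieces
  have mp : (∃ C : ℝ, ∀ u ∈ Ico (-1 : ℝ) 0, |u * y u| ≤ C) → y (-1) = -L := by
    rintro ⟨C, hC⟩
    by_contra h0
    have hc : y (-1) + L ≠ 0 := fun hcc => h0 (by linarith)
    have ht1 : Filter.Tendsto (fun u : ℝ => ((-u) ^ (a-1))⁻¹)
        (nhdsWithin 0 (Iio (0:ℝ))) Filter.atTop := by
      apply Filter.Tendsto.inv_tendsto_nhdsGT_zero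
      apply tendsto_nhdsWithin_of_tendsto_nhds_of_eventually_within
      · exact hrpow0.mono_left nhdsWithin_le_nhds
      · filter_upwards [self_mem_nhdsWithin] with u hu
        exact Real.rpow_pos_of_pos (by simpa using hu : (0:ℝ) < -u) _
    have ht2 : Filter.Tendsto (fun u : ℝ => ((-u) ^ (a-1))⁻¹ * |g u|)
        (nhdsWithin 0 (Iio (0:ℝ))) Filter.atTop :=
      ht1.atTop_mul_pos (abs_pos.mpr hc) hgc.abs
    have heq2 : ∀ᶠ u in nhdsWithin 0 (Iio (0:ℝ)),
        |u * y u| = ((-u) ^ (a-1))⁻¹ * |g u| := by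
      filter_upwards [hev] with u hu
      have hu0 : u < 0 := hu.2
      have hnu : (0:ℝ) < -u := by linarith
      have hpa : (0:ℝ) < (-u) ^ a := Real.rpow_pos_of_pos hnu a
      have hp1 : (0:ℝ) < (-u) ^ (a-1) := Real.rpow_pos_of_pos hnu _
      have e : (-u)^a = (-u)^(a-1) * (-u) := by
        rw [← Real.rpow_add_one (ne_of_gt hnu) (a-1)]; norm_num
      rw [hgdef, abs_mul, abs_mul, abs_of_nonneg hpa.le, abs_of_neg hu0, e]
      field_simp
    have hev2 : ∀ᶠ u in nhdsWithin 0 (Iio (0:ℝ)), C < |u * y u| := by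
      filter_upwards [heq2, ht2.eventually_gt_atTop C] with u h1 h2
      rw [h1]; exact h2
    obtain ⟨u, hu1, hu2⟩ := (hev2.and hev).exists
    exact absurd (hC u hu2) (not_le.mpr hu1)
  have mpr : y (-1) = -L → (∃ C : ℝ, ∀ u ∈ Ico (-1 : ℝ) 0, |u * y u| ≤ C) := by
    intro h0
    refine ⟨A/(a-1), fun u hu => ?_⟩
    have h1 := part2 h0 u hu
    have hu0 : u < 0 := hu.2
    have habs : |u| ≠ 0 := abs_ne_zero.mpr (ne_of_lt hu0)
    rw [abs_mul]
    calc |u| * |y u| ≤ |u| * (A/(a-1) * |u|⁻¹) :=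
          mul_le_mul_of_nonneg_left h1 (abs_nonneg u)
      _ = A/(a-1) := by
          rw [show |u| * (A/(a-1) * |u|⁻¹) = A/(a-1) * (|u| * |u|⁻¹) by ring,
            mul_inv_cancel₀ habs, mul_one]
  refine ⟨⟨mp, mpr⟩, part2, ?_⟩
  -- part 3
  intro h0
  have hc : y (-1) + L ≠ 0 := fun hcc => h0 (by linarith)
  have heq : ∀ᶠ u in nhdsWithin 0 (Iio (0:ℝ)), |u| ^ a * |y u| = |g u| := by
    filter_upwards [hev] with u hu
    have hu0 : u < 0 := hu.2
    rw [abs_of_neg hu0, hgdef, abs_mul,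
      abs_of_nonneg (Real.rpow_nonneg (by linarith : (0:ℝ) ≤ -u) a)]
  have hlim : Filter.limsup (fun u => |u| ^ a * |y u|) (nhdsWithin 0 (Iio (0:ℝ)))
      = |y (-1) + L| := by
    rw [Filter.limsup_congr heq]
    exact (hgc.abs).limsup_eq
  rw [hlim]
  exact abs_pos.mpr hc
end
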